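/- arXiv:1410.1220 — 5 statements merged into one kernel-verified Lean document; each statement's English description precedes it below -/
import Mathlib

section
/- Suppose R₂ᶠ : [0,T] → ℝ^{n×n} is C¹ with R₂ᶠ'(t) + (R₂ᶠ(t)ᵀ + R₂ᶠ(t))A + (1/2)(R₂ᶠ(t)ᵀ + R₂ᶠ(t))σσᵀ(R₂ᶠ(t)ᵀ + R₂ᶠ(t)) − Γ = 0 and R₂ᶠ(T) = Θ; R₁ᶠ : [0,T] → ℝ^{1×n} is C¹ with R₁ᶠ'(t) + R₁ᶠ(t)A + Bᵀ(R₂ᶠ(t)ᵀ + R₂ᶠ(t)) + R₁ᶠ(t)σσᵀ(R₂ᶠ(t)ᵀ + R₂ᶠ(t)) − R = 0 and R₁ᶠ(T) = θ; and R₀ᶠ(t) = γ − ∫_t^T (k − R₁ᶠ(s)B − (1/2)R₁ᶠ(s)σσᵀR₁ᶠ(s)ᵀ − tr(σᵀR₂ᶠ(s)σ)) ds. Then the function h(t,x) := exp(xᵀR₂ᶠ(t)x + R₁ᶠ(t)x + R₀ᶠ(t)) satisfies, for all (t,x) ∈ [0,T] × ℝⁿ, ∂h/∂t(t,x) + (Ax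 + B)·∇ₓh(t,x) + (1/2)Σ_{i,j=1}^n (σσᵀ)_{ij} ∂²h/∂xᵢ∂xⱼ(t,x) = (xᵀΓx + Rx + k) h(t,x), together with the terminal condition h(T,x) = exp(xᵀΘx + θx + γ) for all x ∈ ℝⁿ. -/
open Matrix Set

attribute [local instance] Matrix.normedAddCommGroup Matrix.normedSpace

/-- Partial derivative of `g : ℝⁿ → ℝ` in the `i`-th coordinate at `x`. -/
noncomputable def pd {n : ℕ} (i : Fin n) (g : (Fin n → ℝ) → ℝ) (x : Fin n → ℝ) : ℝ :=
  deriv (fun s => g (Function.update x i s)) (x i)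

open intervalIntegral

/-! ### Auxiliary lemmas -/


lemma hasDerivAt_upd {n : ℕ} (x : Fin n → ℝ) (j i : Fin n) (s : ℝ) :
    HasDerivAt (fun s => Function.update x j s i) (if i = j then 1 else 0) s := by
  simp only [Function.update_apply]
  by_cases h : i = j
  · simp only [h, if_true]; exact hasDerivAt_id' s
  · simpa [h] using hasDerivAt_const s (x i)

lemma hasDerivAt_dot {n : ℕ} (v x : Fin n → ℝ) (j : Fin n) (s : ℝ) :
    HasDerivAt (fun s => v ⬝ᵥ Function.update x j s) (v j) s := by
  have e : ∀ s, v ⬝ᵥ Function.update x j s = ∑ k, v k * Function.update x j s k := fun _ => rfl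
  simp only [e]
  have h := HasDerivAt.fun_sum (u := Finset.univ)
    (fun k _ => ((hasDerivAt_upd x j k s).const_mul (v k)))
  simpa [mul_ite, Finset.sum_ite_eq'] using h

lemma sum_deriv_quad {n : ℕ} (M : Matrix (Fin n) (Fin n) ℝ) (x : Fin n → ℝ) (j : Fin n) :
    (Mᵀ + M).mulVec x j = ∑ i, ∑ k,
      ((if i = j then (1:ℝ) else 0) * M i k * x k + x i * M i k * (if k = j then 1 else 0)) := by
  have key : ∀ i, ∑ k, ((if i = j then (1:ℝ) else 0) * M i k * x k
        + x i * M i k * (if k = j then 1 else 0))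
      = (if i = j then (1:ℝ) else 0) * (∑ k, M i k * x k) + x i * M i j := by
    intro i
    rw [Finset.sum_add_distrib, Finset.mul_sum]
    congr 1
    · exact Finset.sum_congr rfl fun k _ => by ring
    · simp [mul_ite, Finset.sum_ite_eq']
  simp only [key]
  rw [Finset.sum_add_distrib]
  simp only [ite_mul, one_mul, zero_mul, Finset.sum_ite_eq', Finset.mem_univ, if_true]
  simp only [Matrix.mulVec, dotProduct, Matrix.add_apply, Matrix.transpose_apply, add_mul]
  rw [Finset.sum_add_distrib, add_comm]
  congr 1
  exact Finset.sum_congr rfl fun i _ => by ring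

lemma hasDerivAt_quad {n : ℕ} (M : Matrix (Fin n) (Fin n) ℝ) (x : Fin n → ℝ) (j : Fin n) :
    HasDerivAt (fun s => (Function.update x j s) ⬝ᵥ M.mulVec (Function.update x j s))
      ((Mᵀ + M).mulVec x j) (x j) := by
  have e : ∀ s, (Function.update x j s) ⬝ᵥ M.mulVec (Function.update x j s)
      = ∑ i, ∑ k, Function.update x j s i * M i k * Function.update x j s k := by
    intro s
    simp [dotProduct, Matrix.mulVec, Finset.mul_sum, mul_assoc]
  simp only [e]
  have h := HasDerivAt.fun_sum (u := Finset.univ) (fun i _ => HasDerivAt.fun_sum (u := Finset.univ)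
    (fun k _ => (((hasDerivAt_upd x j i (x j)).mul_const (M i k)).fun_mul
      (hasDerivAt_upd x j k (x j)))))
  simp only [Function.update_eq_self] at h
  rw [sum_deriv_quad]
  exact h

/-- the quadratic-exponential function -/
noncomputable def qe {n : ℕ} (M : Matrix (Fin n) (Fin n) ℝ) (r : Fin n → ℝ) (c : ℝ)
    (y : Fin n → ℝ) : ℝ := Real.exp (y ⬝ᵥ M.mulVec y + r ⬝ᵥ y + c)

lemma hasDerivAt_qe {n : ℕ} (M : Matrix (Fin n) (Fin n) ℝ) (r : Fin n → ℝ) (c : ℝ)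
    (x : Fin n → ℝ) (j : Fin n) :
    HasDerivAt (fun s => qe M r c (Function.update x j s))
      (qe M r c x * ((Mᵀ + M).mulVec x j + r j)) (x j) := by
  have h := (((hasDerivAt_quad M x j).add (hasDerivAt_dot r x j (x j))).add_const c).exp
  simpa [qe, Function.update_eq_self] using h

lemma pd_qe {n : ℕ} (M : Matrix (Fin n) (Fin n) ℝ) (r : Fin n → ℝ) (c : ℝ)
    (x : Fin n → ℝ) (j : Fin n) :
    pd j (qe M r c) x = qe M r c x * ((Mᵀ + M).mulVec x j + r j) :=
  (hasDerivAt_qe M r c x j).deriv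

lemma pd_pd_qe {n : ℕ} (M : Matrix (Fin n) (Fin n) ℝ) (r : Fin n → ℝ) (c : ℝ)
    (x : Fin n → ℝ) (i j : Fin n) :
    pd i (pd j (qe M r c)) x
      = qe M r c x * (((Mᵀ + M).mulVec x i + r i) * ((Mᵀ + M).mulVec x j + r j)
          + (Mᵀ + M) j i) := by
  have e : pd j (qe M r c) = fun y => qe M r c y * ((Mᵀ + M).mulVec y j + r j) :=
    funext fun y => pd_qe M r c y j
  rw [e, pd]
  have h2 : HasDerivAt (fun s => (Mᵀ + M).mulVec (Function.update x i s) j + r j)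
      ((Mᵀ + M) j i) (x i) := by
    have e2 : (fun s => (Mᵀ + M).mulVec (Function.update x i s) j + r j)
        = fun s => ((Mᵀ + M) j) ⬝ᵥ (Function.update x i s) + r j := rfl
    rw [e2]
    exact (hasDerivAt_dot ((Mᵀ + M) j) x i (x i)).add_const (r j)
  have h := (hasDerivAt_qe M r c x i).fun_mul h2
  rw [h.deriv]
  simp [Function.update_eq_self]
  ring

lemma entry_hasDerivWithinAt {m n : ℕ} {F : ℝ → Matrix (Fin m) (Fin n) ℝ}
    {F' : Matrix (Fin m) (Fin n) ℝ} {s : Set ℝ} {t : ℝ}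
    (h : HasDerivWithinAt F F' s t) (i : Fin m) (j : Fin n) :
    HasDerivWithinAt (fun τ => F τ i j) (F' i j) s t :=
  hasDerivWithinAt_pi.1 (hasDerivWithinAt_pi.1 h i) j

lemma quad_hasDerivWithinAt {n : ℕ} {F : ℝ → Matrix (Fin n) (Fin n) ℝ}
    {F' : Matrix (Fin n) (Fin n) ℝ} {s : Set ℝ} {t : ℝ}
    (h : HasDerivWithinAt F F' s t) (x : Fin n → ℝ) :
    HasDerivWithinAt (fun τ => x ⬝ᵥ (F τ).mulVec x) (x ⬝ᵥ F'.mulVec x) s t := by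
  have e : ∀ M : Matrix (Fin n) (Fin n) ℝ, x ⬝ᵥ M.mulVec x = ∑ i, ∑ k, x i * M i k * x k := by
    intro M
    simp [dotProduct, Matrix.mulVec, Finset.mul_sum, mul_assoc]
  simp only [e]
  exact HasDerivWithinAt.fun_sum (fun i _ => HasDerivWithinAt.fun_sum (fun k _ =>
    ((entry_hasDerivWithinAt h i k).const_mul (x i)).mul_const (x k)))

lemma row_hasDerivWithinAt {n : ℕ} {F : ℝ → Matrix (Fin 1) (Fin n) ℝ}
    {F' : Matrix (Fin 1) (Fin n) ℝ} {s : Set ℝ} {t : ℝ}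
    (h : HasDerivWithinAt F F' s t) (x : Fin n → ℝ) :
    HasDerivWithinAt (fun τ => (F τ).mulVec x 0) (F'.mulVec x 0) s t := by
  have e : ∀ M : Matrix (Fin 1) (Fin n) ℝ, M.mulVec x 0 = ∑ k, M 0 k * x k := fun _ => rfl
  simp only [e]
  exact HasDerivWithinAt.fun_sum (fun k _ => (entry_hasDerivWithinAt h 0 k).mul_const (x k))

lemma hasDerivWithinAt_R0 {T : ℝ} (hT : 0 ≤ T) (f : ℝ → ℝ) (hf : ContinuousOn f (Icc 0 T))
    (γ : ℝ) {t : ℝ} (ht : t ∈ Icc 0 T) :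
    HasDerivWithinAt (fun u => γ - ∫ s in u..T, f s) (f t) (Icc 0 T) t := by
  set c : ℝ → ℝ := fun u => max 0 (min u T) with hc
  have hmem : ∀ u, c u ∈ Icc 0 T := fun u => ⟨le_max_left _ _, max_le hT (min_le_right _ _)⟩
  have hcid : ∀ u ∈ Icc 0 T, c u = u := by
    intro u hu
    simp [hc, min_eq_left hu.2, max_eq_right hu.1]
  set g : ℝ → ℝ := f ∘ c with hg
  have hgc : Continuous g :=
    hf.comp_continuous (continuous_const.max (continuous_id.min continuous_const)) hmem
  have hint : HasDerivAt (fun u => ∫ s in u..T, g s) (-g t) t :=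
    integral_hasDerivAt_left (hgc.intervalIntegrable t T)
      (hgc.stronglyMeasurableAtFilter _ _) hgc.continuousAt
  have hfin : HasDerivWithinAt (fun u => γ - ∫ s in u..T, g s) (g t) (Icc 0 T) t := by
    simpa using ((hint.const_sub γ).hasDerivWithinAt (s := Icc 0 T))
  have heq : ∀ u ∈ Icc 0 T, γ - ∫ s in u..T, g s = γ - ∫ s in u..T, f s := by
    intro u hu
    congr 1
    apply integral_congr
    intro s hs
    have hs' : s ∈ Icc 0 T := by
      have hsub : uIcc u T ⊆ Icc 0 T := uIcc_subset_Icc hu (right_mem_Icc.2 hT)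
      exact hsub hs
    exact congrArg f (hcid s hs')
  have hfin2 := hfin.congr (fun u hu => (heq u hu).symm) (heq t ht).symm
  have hgt : g t = f t := congrArg f (hcid t ht)
  rwa [hgt] at hfin2

lemma e_tr (P : Matrix (Fin 1) (Fin 1) ℝ) : P 0 0 = Pᵀ 0 0 := rfl

lemma key_alg {n : ℕ} (A σ : Matrix (Fin n) (Fin n) ℝ) (B : Matrix (Fin n) (Fin 1) ℝ)
    (Γ R₂ : Matrix (Fin n) (Fin n) ℝ) (R P : Matrix (Fin 1) (Fin n) ℝ) (k : ℝ)
    (X : Matrix (Fin n) (Fin 1) ℝ) :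
    (Xᵀ * (Γ - (R₂ᵀ + R₂) * A - (1/2 : ℝ) • ((R₂ᵀ + R₂) * (σ * σᵀ) * (R₂ᵀ + R₂))) * X) 0 0
      + ((R - P * A - Bᵀ * (R₂ᵀ + R₂) - P * (σ * σᵀ) * (R₂ᵀ + R₂)) * X) 0 0
      + (k - (P * B) 0 0 - (1/2) * (P * (σ * σᵀ) * Pᵀ) 0 0 - Matrix.trace (σᵀ * R₂ * σ))
      + ((A * X + B)ᵀ * ((R₂ᵀ + R₂) * X + Pᵀ)) 0 0
      + (1/2) * ((((R₂ᵀ + R₂) * X + Pᵀ)ᵀ * (σ * σᵀ) * ((R₂ᵀ + R₂) * X + Pᵀ)) 0 0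
          + Matrix.trace ((σ * σᵀ) * (R₂ᵀ + R₂)))
    = (Xᵀ * Γ * X) 0 0 + (R * X) 0 0 + k := by
  set S := R₂ᵀ + R₂ with hSdef
  have hS : Sᵀ = S := by rw [hSdef, transpose_add, transpose_transpose, add_comm]
  set W := σ * σᵀ with hWdef
  have hW : Wᵀ = W := by rw [hWdef, transpose_mul, transpose_transpose]
  have htr : Matrix.trace (W * S) = 2 * Matrix.trace (σᵀ * (R₂ * σ)) := by
    rw [hSdef, hWdef, Matrix.mul_add, Matrix.trace_add]
    have h1 : Matrix.trace (σ * σᵀ * R₂) = Matrix.trace (σᵀ * (R₂ * σ)) := by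
      rw [Matrix.mul_assoc, Matrix.trace_mul_comm, Matrix.mul_assoc]
    have h2 : Matrix.trace (σ * σᵀ * R₂ᵀ) = Matrix.trace (σᵀ * (R₂ * σ)) := by
      rw [Matrix.mul_assoc, Matrix.trace_mul_comm, Matrix.mul_assoc,
        ← Matrix.trace_transpose (σᵀ * (R₂ᵀ * σ))]
      congr 1
      simp [Matrix.transpose_mul, Matrix.mul_assoc]
    rw [h1, h2]; ring
  have a1 : (Xᵀ * (Aᵀ * (S * X))) 0 0 = (Xᵀ * (S * (A * X))) 0 0 := by
    rw [e_tr (Xᵀ * (Aᵀ * (S * X)))]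
    simp only [Matrix.transpose_mul, Matrix.transpose_transpose, hS, Matrix.mul_assoc]
  have a2 : (Xᵀ * (Aᵀ * Pᵀ)) 0 0 = (P * (A * X)) 0 0 := by
    rw [e_tr (Xᵀ * (Aᵀ * Pᵀ))]
    simp only [Matrix.transpose_mul, Matrix.transpose_transpose, Matrix.mul_assoc]
  have a3 : (Bᵀ * Pᵀ) 0 0 = (P * B) 0 0 := by
    rw [e_tr (Bᵀ * Pᵀ)]
    simp only [Matrix.transpose_mul, Matrix.transpose_transpose]
  have a4 : (Xᵀ * (S * (W * Pᵀ))) 0 0 = (P * (W * (S * X))) 0 0 := by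
    rw [e_tr (Xᵀ * (S * (W * Pᵀ)))]
    simp only [Matrix.transpose_mul, Matrix.transpose_transpose, hS, hW, Matrix.mul_assoc]
  simp only [Matrix.mul_sub, Matrix.sub_mul, Matrix.mul_add, Matrix.add_mul,
    Matrix.transpose_add, Matrix.transpose_mul, Matrix.transpose_transpose, hS,
    Matrix.mul_smul, Matrix.smul_mul, Matrix.sub_apply, Matrix.add_apply,
    Matrix.smul_apply, smul_eq_mul, Matrix.mul_assoc]
  rw [htr, a1, a2, a3, a4]
  ring

/-- column matrix of a vector -/
def cm {n : ℕ} (x : Fin n → ℝ) : Matrix (Fin n) (Fin 1) ℝ := Matrix.of (fun i _ => x i)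

lemma quad_entry {n : ℕ} (M : Matrix (Fin n) (Fin n) ℝ) (x : Fin n → ℝ) :
    x ⬝ᵥ M.mulVec x = ((cm x)ᵀ * M * (cm x)) 0 0 := by
  simp [cm, Matrix.mul_apply, Matrix.mulVec, dotProduct, Finset.sum_mul, Finset.mul_sum,
    mul_assoc]
  rw [Finset.sum_comm]

lemma row_entry {n : ℕ} (r : Matrix (Fin 1) (Fin n) ℝ) (x : Fin n → ℝ) :
    r.mulVec x 0 = (r * cm x) 0 0 := by
  simp [cm, Matrix.mul_apply, Matrix.mulVec, dotProduct]

lemma sum1_entry {n : ℕ} (A S : Matrix (Fin n) (Fin n) ℝ) (B : Matrix (Fin n) (Fin 1) ℝ)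
    (P : Matrix (Fin 1) (Fin n) ℝ) (x : Fin n → ℝ) :
    ∑ i, (A.mulVec x i + B i 0) * (S.mulVec x i + P 0 i)
      = ((A * cm x + B)ᵀ * (S * cm x + Pᵀ)) 0 0 := by
  simp only [Matrix.mul_apply, Matrix.transpose_apply, Matrix.add_apply, Matrix.mulVec,
    dotProduct, cm, Matrix.of_apply]

lemma sum2_entry {n : ℕ} (W S : Matrix (Fin n) (Fin n) ℝ) (P : Matrix (Fin 1) (Fin n) ℝ)
    (x : Fin n → ℝ) :
    ∑ i, ∑ j, W i j * ((S.mulVec x i + P 0 i) * (S.mulVec x j + P 0 j) + S j i)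
      = ((S * cm x + Pᵀ)ᵀ * W * (S * cm x + Pᵀ)) 0 0 + Matrix.trace (W * S) := by
  have ht : Matrix.trace (W * S) = ∑ i, ∑ j, W i j * S j i := by
    simp [Matrix.trace, Matrix.diag, Matrix.mul_apply]
  have hb : ((S * cm x + Pᵀ)ᵀ * W * (S * cm x + Pᵀ)) 0 0
      = ∑ i, ∑ j, (S.mulVec x i + P 0 i) * W i j * (S.mulVec x j + P 0 j) := by
    simp only [Matrix.mul_apply, Matrix.transpose_apply, Matrix.add_apply,
      Finset.sum_mul, Matrix.mulVec, dotProduct, cm, Matrix.of_apply]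
    rw [Finset.sum_comm]
  rw [ht, hb, ← Finset.sum_add_distrib]
  refine Finset.sum_congr rfl fun i _ => ?_
  rw [← Finset.sum_add_distrib]
  exact Finset.sum_congr rfl fun j _ => by ring

/-- With `R₂ᶠ`, `R₁ᶠ` solving the forward Riccati equations and `R₀ᶠ` its
integral, `h(t,x) = exp(xᵀR₂ᶠ(t)x + R₁ᶠ(t)x + R₀ᶠ(t))` solves the PDE
`∂h/∂t + (Ax+B)·∇ₓh + (1/2)Σ (σσᵀ)ᵢⱼ ∂²h/∂xᵢ∂xⱼ = (xᵀΓx + Rx + k) h` with terminal value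
`h(T,x) = exp(xᵀΘx + θx + γ)`. -/
theorem statement13 (n : ℕ) (hn : 1 ≤ n) (T : ℝ) (hT : 0 < T)
    (A σ : Matrix (Fin n) (Fin n) ℝ) (B : Matrix (Fin n) (Fin 1) ℝ)
    (Γ : Matrix (Fin n) (Fin n) ℝ) (hΓ : Γ.PosSemidef)
    (Θ : Matrix (Fin n) (Fin n) ℝ)
    (R θ : Matrix (Fin 1) (Fin n) ℝ) (k γ : ℝ)
    (R₂ : ℝ → Matrix (Fin n) (Fin n) ℝ)
    (hR₂smooth : ContDiffOn ℝ 1 R₂ (Icc 0 T))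
    (hR₂ode : ∀ t ∈ Icc 0 T,
      derivWithin R₂ (Icc 0 T) t + ((R₂ t)ᵀ + R₂ t) * A
        + (1 / 2 : ℝ) • (((R₂ t)ᵀ + R₂ t) * (σ * σᵀ) * ((R₂ t)ᵀ + R₂ t)) - Γ = 0)
    (hR₂T : R₂ T = Θ)
    (R₁ : ℝ → Matrix (Fin 1) (Fin n) ℝ)
    (hR₁smooth : ContDiffOn ℝ 1 R₁ (Icc 0 T))
    (hR₁ode : ∀ t ∈ Icc 0 T,
      derivWithin R₁ (Icc 0 T) t + R₁ t * A + Bᵀ * ((R₂ t)ᵀ + R₂ t)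
        + R₁ t * (σ * σᵀ) * ((R₂ t)ᵀ + R₂ t) - R = 0)
    (hR₁T : R₁ T = θ)
    (R₀ : ℝ → ℝ)
    (hR₀ : ∀ t, R₀ t = γ - ∫ s in t..T,
      (k - (R₁ s * B) 0 0 - (1 / 2) * (R₁ s * (σ * σᵀ) * (R₁ s)ᵀ) 0 0
        - Matrix.trace (σᵀ * R₂ s * σ)))
    (h : ℝ → (Fin n → ℝ) → ℝ)
    (hh : ∀ t x, h t x =
      Real.exp (x ⬝ᵥ (R₂ t).mulVec x + (R₁ t).mulVec x 0 + R₀ t)) :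
    (∀ t ∈ Icc 0 T, ∀ x : Fin n → ℝ,
      derivWithin (fun τ => h τ x) (Icc 0 T) t
        + (∑ i, (A.mulVec x i + B i 0) * pd i (h t) x)
        + (1 / 2) * ∑ i, ∑ j, (σ * σᵀ) i j * pd i (pd j (h t)) x
      = (x ⬝ᵥ Γ.mulVec x + R.mulVec x 0 + k) * h t x) ∧
    (∀ x : Fin n → ℝ, h T x =
      Real.exp (x ⬝ᵥ Θ.mulVec x + θ.mulVec x 0 + γ)) := by
  have hT' : (0:ℝ) ≤ T := le_of_lt hT
  constructor
  · intro t ht x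
    have hht : h t = qe (R₂ t) (R₁ t 0) (R₀ t) := funext fun y => by rw [hh]; rfl
    have hpd1 : ∀ (y : Fin n → ℝ) (j : Fin n), pd j (h t) y
        = h t y * (((R₂ t)ᵀ + R₂ t).mulVec y j + R₁ t 0 j) := by
      intro y j; rw [hht]; exact pd_qe _ _ _ y j
    have hpd2 : ∀ i j : Fin n, pd i (pd j (h t)) x
        = h t x * (((((R₂ t)ᵀ + R₂ t).mulVec x i + R₁ t 0 i)
            * ((((R₂ t)ᵀ + R₂ t)).mulVec x j + R₁ t 0 j)) + ((R₂ t)ᵀ + R₂ t) j i) := by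
      intro i j; rw [hht]; exact pd_pd_qe _ _ _ x i j
    set f : ℝ → ℝ := fun s => k - (R₁ s * B) 0 0 - (1 / 2) * (R₁ s * (σ * σᵀ) * (R₁ s)ᵀ) 0 0
      - Matrix.trace (σᵀ * R₂ s * σ) with hfdef
    have hcont : ContinuousOn f (Icc 0 T) := by
      have h1 : ContinuousOn R₁ (Icc 0 T) := hR₁smooth.continuousOn
      have h2 : ContinuousOn R₂ (Icc 0 T) := hR₂smooth.continuousOn
      have e1 : ∀ i j, ContinuousOn (fun s => R₁ s i j) (Icc 0 T) := by
        intro i j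
        exact ((continuous_apply j).comp (continuous_apply i)).comp_continuousOn h1
      have e2 : ∀ i j, ContinuousOn (fun s => R₂ s i j) (Icc 0 T) := by
        intro i j
        exact ((continuous_apply j).comp (continuous_apply i)).comp_continuousOn h2
      have c1 : ContinuousOn (fun s => (R₁ s * B) 0 0) (Icc 0 T) := by
        simp only [Matrix.mul_apply]
        exact continuousOn_finset_sum _ fun j _ => (e1 0 j).mul continuousOn_const
      have c2 : ContinuousOn (fun s => (R₁ s * (σ * σᵀ) * (R₁ s)ᵀ) 0 0) (Icc 0 T) := by
        simp only [Matrix.mul_apply, Matrix.transpose_apply, Finset.sum_mul]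
        exact continuousOn_finset_sum _ fun j _ => continuousOn_finset_sum _ fun l _ =>
          (((e1 0 l).mul continuousOn_const).mul (e1 0 j))
      have c3 : ContinuousOn (fun s => Matrix.trace (σᵀ * R₂ s * σ)) (Icc 0 T) := by
        simp only [Matrix.trace, Matrix.diag, Matrix.mul_apply, Matrix.transpose_apply,
          Finset.sum_mul]
        exact continuousOn_finset_sum _ fun i _ => continuousOn_finset_sum _ fun j _ =>
          continuousOn_finset_sum _ fun l _ =>
            ((continuousOn_const.mul (e2 l j)).mul continuousOn_const)
      exact ((continuousOn_const.sub c1).sub (continuousOn_const.mul c2)).sub c3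
    have hM : HasDerivWithinAt R₂ (derivWithin R₂ (Icc 0 T) t) (Icc 0 T) t :=
      ((hR₂smooth.differentiableOn one_ne_zero) t ht).hasDerivWithinAt
    have hP : HasDerivWithinAt R₁ (derivWithin R₁ (Icc 0 T) t) (Icc 0 T) t :=
      ((hR₁smooth.differentiableOn one_ne_zero) t ht).hasDerivWithinAt
    have hR0' : HasDerivWithinAt R₀ (f t) (Icc 0 T) t := by
      have hfun : R₀ = fun u => γ - ∫ s in u..T, f s := funext fun u => hR₀ u
      rw [hfun]
      exact hasDerivWithinAt_R0 hT' f hcont γ ht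
    have hq : HasDerivWithinAt
        (fun τ => x ⬝ᵥ (R₂ τ).mulVec x + (R₁ τ).mulVec x 0 + R₀ τ)
        (x ⬝ᵥ (derivWithin R₂ (Icc 0 T) t).mulVec x
          + (derivWithin R₁ (Icc 0 T) t).mulVec x 0 + f t) (Icc 0 T) t :=
      ((quad_hasDerivWithinAt hM x).add (row_hasDerivWithinAt hP x)).add hR0'
    have hfx : (fun τ => h τ x) = fun τ =>
        Real.exp (x ⬝ᵥ (R₂ τ).mulVec x + (R₁ τ).mulVec x 0 + R₀ τ) :=
      funext fun τ => hh τ x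
    have hDW : derivWithin (fun τ => h τ x) (Icc 0 T) t
        = h t x * (x ⬝ᵥ (derivWithin R₂ (Icc 0 T) t).mulVec x
          + (derivWithin R₁ (Icc 0 T) t).mulVec x 0 + f t) := by
      rw [hfx, hh t x]
      exact hq.exp.derivWithin (uniqueDiffOn_Icc hT t ht)
    have hM' : derivWithin R₂ (Icc 0 T) t
        = Γ - ((R₂ t)ᵀ + R₂ t) * A
          - (1 / 2 : ℝ) • (((R₂ t)ᵀ + R₂ t) * (σ * σᵀ) * ((R₂ t)ᵀ + R₂ t)) := by
      have h0 := hR₂ode t ht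
      rw [sub_eq_zero] at h0
      rw [← h0]; abel
    have hP' : derivWithin R₁ (Icc 0 T) t
        = R - R₁ t * A - Bᵀ * ((R₂ t)ᵀ + R₂ t) - R₁ t * (σ * σᵀ) * ((R₂ t)ᵀ + R₂ t) := by
      have h0 := hR₁ode t ht
      rw [sub_eq_zero] at h0
      rw [← h0]; abel
    have key : (x ⬝ᵥ (derivWithin R₂ (Icc 0 T) t).mulVec x
          + (derivWithin R₁ (Icc 0 T) t).mulVec x 0 + f t)
        + (∑ i, (A.mulVec x i + B i 0) * (((R₂ t)ᵀ + R₂ t).mulVec x i + R₁ t 0 i))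
        + (1/2) * (∑ i, ∑ j, (σ * σᵀ) i j * (((((R₂ t)ᵀ + R₂ t).mulVec x i + R₁ t 0 i)
            * ((((R₂ t)ᵀ + R₂ t)).mulVec x j + R₁ t 0 j)) + ((R₂ t)ᵀ + R₂ t) j i))
        = x ⬝ᵥ Γ.mulVec x + R.mulVec x 0 + k := by
      rw [hM', hP', hfdef]
      rw [quad_entry (Γ - ((R₂ t)ᵀ + R₂ t) * A
          - (1 / 2 : ℝ) • (((R₂ t)ᵀ + R₂ t) * (σ * σᵀ) * ((R₂ t)ᵀ + R₂ t))) x,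
        row_entry (R - R₁ t * A - Bᵀ * ((R₂ t)ᵀ + R₂ t)
          - R₁ t * (σ * σᵀ) * ((R₂ t)ᵀ + R₂ t)) x,
        sum1_entry A ((R₂ t)ᵀ + R₂ t) B (R₁ t) x,
        sum2_entry (σ * σᵀ) ((R₂ t)ᵀ + R₂ t) (R₁ t) x,
        quad_entry Γ x, row_entry R x]
      have := key_alg A σ B Γ (R₂ t) R (R₁ t) k (cm x)
      linear_combination this
    have f1 : ∑ i, (A.mulVec x i + B i 0)
          * (h t x * (((R₂ t)ᵀ + R₂ t).mulVec x i + R₁ t 0 i))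
        = h t x * ∑ i, (A.mulVec x i + B i 0)
          * (((R₂ t)ᵀ + R₂ t).mulVec x i + R₁ t 0 i) := by
      rw [Finset.mul_sum]
      exact Finset.sum_congr rfl fun i _ => by ring
    have f2 : ∑ i, ∑ j, (σ * σᵀ) i j * (h t x * (((((R₂ t)ᵀ + R₂ t).mulVec x i + R₁ t 0 i)
            * ((((R₂ t)ᵀ + R₂ t)).mulVec x j + R₁ t 0 j)) + ((R₂ t)ᵀ + R₂ t) j i))
        = h t x * ∑ i, ∑ j, (σ * σᵀ) i j * (((((R₂ t)ᵀ + R₂ t).mulVec x i + R₁ t 0 i)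
            * ((((R₂ t)ᵀ + R₂ t)).mulVec x j + R₁ t 0 j)) + ((R₂ t)ᵀ + R₂ t) j i) := by
      rw [Finset.mul_sum]
      refine Finset.sum_congr rfl fun i _ => ?_
      rw [Finset.mul_sum]
      exact Finset.sum_congr rfl fun j _ => by ring
    rw [hDW]
    simp only [hpd1, hpd2]
    rw [f1, f2]
    linear_combination (h t x) * key
  · intro x
    have hR0T : R₀ T = γ := by rw [hR₀]; simp
    rw [hh, hR₂T, hR₁T, hR0T]
end

section
/- Let t < T and x ∈ ℝ, and let g : [t,T] → ℝ be continuous. Then g satisfies the integral equation g(s) = x + αβ∫_t^s e^{−β(v−t)} dv − 2β∫_t^s g(v) dv − bσ²∫_t^s (∫_v^T e^{−β(v₁−t)} dv₁) dv − 2cσ²∫_t^s (∫_v^T g(v₁) dv₁) dv for all s ∈ [t,T] if and only if g is twice continuously differentiable on [t,T] and satisfies g''(s) = −αβ²e^{−β(s−t)} − 2βg'(s) + bσ²e^{−β(s−t)} + 2cσ²g(s) for all s ∈ [t,T], together with the boundary conditions g(t) = x and g'(t) = αβ − 2βx − bσ²∫_t^T e^{−β(v₁−t)} dv₁ − 2cσ²∫_t^T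 g(v₁) dv₁. -/
open Set

open intervalIntegral

/-- Equivalence between the integral equation for `g` on `[t,T]` and the
second-order ODE boundary value problem. -/
theorem statement14 (α β σ b c : ℝ) (t T x : ℝ) (htT : t < T)
    (g : ℝ → ℝ) (hg : ContinuousOn g (Icc t T)) :
    (∀ s ∈ Icc t T,
      g s = x + α * β * (∫ v in t..s, Real.exp (-β * (v - t)))
        - 2 * β * (∫ v in t..s, g v)
        - b * σ ^ 2 * (∫ v in t..s, (∫ v₁ in v..T, Real.exp (-β * (v₁ - t))))
        - 2 * c * σ ^ 2 * (∫ v in t..s, (∫ v₁ in v..T, g v₁)))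
    ↔
    (ContDiffOn ℝ 2 g (Icc t T) ∧
      (∀ s ∈ Icc t T,
        derivWithin (derivWithin g (Icc t T)) (Icc t T) s
          = -α * β ^ 2 * Real.exp (-β * (s - t))
            - 2 * β * derivWithin g (Icc t T) s
            + b * σ ^ 2 * Real.exp (-β * (s - t))
            + 2 * c * σ ^ 2 * g s) ∧
      g t = x ∧
      derivWithin g (Icc t T) t
        = α * β - 2 * β * x
          - b * σ ^ 2 * (∫ v₁ in t..T, Real.exp (-β * (v₁ - t)))
          - 2 * c * σ ^ 2 * (∫ v₁ in t..T, g v₁)) := by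
  have hUD : UniqueDiffOn ℝ (Icc t T) := uniqueDiffOn_Icc htT
  have htI : t ∈ Icc t T := ⟨le_refl t, htT.le⟩
  set π : ℝ → ℝ := fun y => min (max y t) T with hπdef
  have hπc : Continuous π := (continuous_id.max continuous_const).min continuous_const
  have hπmem : ∀ y, π y ∈ Icc t T := fun y => ⟨le_min (le_max_right y t) htT.le, min_le_right _ _⟩
  have hπeq : ∀ y ∈ Icc t T, π y = y := fun y hy => by
    simp only [hπdef]; rw [max_eq_left hy.1, min_eq_left hy.2]
  set G0 : ℝ → ℝ := fun y => g (π y) with hG0def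
  have hG0c : Continuous G0 := hg.comp_continuous hπc hπmem
  have hG0eq : ∀ y ∈ Icc t T, G0 y = g y := fun y hy => by rw [hG0def]; simp [hπeq y hy]
  have hEc : Continuous (fun v => Real.exp (-β * (v - t))) := by fun_prop
  -- FTC primitives
  have prim : ∀ (f : ℝ → ℝ), Continuous f → ∀ s : ℝ,
      HasDerivAt (fun u => ∫ v in t..u, f v) (f s) s := fun f hf s =>
    integral_hasDerivAt_right (hf.intervalIntegrable _ _)
      hf.aestronglyMeasurable.stronglyMeasurableAtFilter hf.continuousAt
  have prim' : ∀ (f : ℝ → ℝ), Continuous f → ∀ s : ℝ,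
      HasDerivAt (fun u => ∫ v in u..T, f v) (-(f s)) s := fun f hf s =>
    integral_hasDerivAt_left (hf.intervalIntegrable _ _)
      hf.aestronglyMeasurable.stronglyMeasurableAtFilter hf.continuousAt
  set h₁ : ℝ → ℝ := fun v => ∫ v₁ in v..T, Real.exp (-β * (v₁ - t)) with hh₁def
  set h₂ : ℝ → ℝ := fun v => ∫ v₁ in v..T, G0 v₁ with hh₂def
  have hh₁der : ∀ s : ℝ, HasDerivAt h₁ (-Real.exp (-β * (s - t))) s := prim' _ hEc
  have hh₂der : ∀ s : ℝ, HasDerivAt h₂ (-(G0 s)) s := prim' _ hG0c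
  have hh₁c : Continuous h₁ := by
    rw [continuous_iff_continuousAt]; exact fun s => (hh₁der s).continuousAt
  have hh₂c : Continuous h₂ := by
    rw [continuous_iff_continuousAt]; exact fun s => (hh₂der s).continuousAt
  set G : ℝ → ℝ := fun s => α * β * Real.exp (-β * (s - t)) - 2 * β * G0 s
      - b * σ ^ 2 * h₁ s - 2 * c * σ ^ 2 * h₂ s with hGdef
  have hGc : Continuous G := by
    apply Continuous.sub; apply Continuous.sub; apply Continuous.sub
    · fun_prop
    · exact continuous_const.mul hG0c
    · exact continuous_const.mul hh₁c
    · exact continuous_const.mul hh₂c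
  set P : ℝ → ℝ := fun s => x + ∫ v in t..s, G v with hPdef
  have hPder : ∀ s : ℝ, HasDerivAt P (G s) s := fun s => (prim G hGc s).const_add x
  have hPc : Continuous P := by
    rw [continuous_iff_continuousAt]; exact fun s => (hPder s).continuousAt
  have hEder : ∀ s : ℝ, HasDerivAt (fun v => Real.exp (-β * (v - t)))
      (Real.exp (-β * (s - t)) * (-β)) s := by
    intro s
    have h1 : HasDerivAt (fun v : ℝ => -β * (v - t)) (-β) s := by
      simpa using (((hasDerivAt_id s).sub_const t).const_mul (-β))
    simpa [mul_comm] using h1.exp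
  -- key linearity
  have key : ∀ s ∈ Icc t T, P s =
      x + α * β * (∫ v in t..s, Real.exp (-β * (v - t)))
        - 2 * β * (∫ v in t..s, g v)
        - b * σ ^ 2 * (∫ v in t..s, h₁ v)
        - 2 * c * σ ^ 2 * (∫ v in t..s, (∫ v₁ in v..T, g v₁)) := by
    intro s hs
    have hsub : uIcc t s ⊆ Icc t T := uIcc_subset_Icc htI hs
    have e4 : (∫ v in t..s, h₂ v) = ∫ v in t..s, (∫ v₁ in v..T, g v₁) := by
      apply integral_congr
      intro v hv
      rw [hh₂def]
      exact integral_congr fun y hy => hG0eq y (uIcc_subset_Icc (hsub hv) ⟨htT.le, le_refl T⟩ hy)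
    have e2 : (∫ v in t..s, G0 v) = ∫ v in t..s, g v :=
      integral_congr fun y hy => hG0eq y (hsub hy)
    have i1 : IntervalIntegrable (fun v => α * β * Real.exp (-β * (v - t)))
        MeasureTheory.volume t s := Continuous.intervalIntegrable (by fun_prop) _ _
    have i2 : IntervalIntegrable (fun v => 2 * β * G0 v) MeasureTheory.volume t s :=
      ((continuous_const.mul hG0c).intervalIntegrable _ _)
    have i3 : IntervalIntegrable (fun v => b * σ ^ 2 * h₁ v) MeasureTheory.volume t s :=
      ((continuous_const.mul hh₁c).intervalIntegrable _ _)
    have i4 : IntervalIntegrable (fun v => 2 * c * σ ^ 2 * h₂ v) MeasureTheory.volume t s :=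
      ((continuous_const.mul hh₂c).intervalIntegrable _ _)
    have hmain : (∫ v in t..s, G v)
        = α * β * (∫ v in t..s, Real.exp (-β * (v - t))) - 2 * β * (∫ v in t..s, G0 v)
          - b * σ ^ 2 * (∫ v in t..s, h₁ v) - 2 * c * σ ^ 2 * (∫ v in t..s, h₂ v) := by
      rw [hGdef]
      rw [integral_sub ((i1.sub i2).sub i3) i4, integral_sub (i1.sub i2) i3, integral_sub i1 i2,
        integral_const_mul, integral_const_mul, integral_const_mul, integral_const_mul]
    rw [hPdef]
    simp only []
    rw [hmain, e2, e4]
    ring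
  -- derivative of G within Icc, given a derivative for G0
  have hGder : ∀ (d : ℝ → ℝ), (∀ s ∈ Icc t T, HasDerivWithinAt G0 (d s) (Icc t T) s) →
      ∀ s ∈ Icc t T, HasDerivWithinAt G
        (-α * β ^ 2 * Real.exp (-β * (s - t)) - 2 * β * d s
          + b * σ ^ 2 * Real.exp (-β * (s - t)) + 2 * c * σ ^ 2 * G0 s) (Icc t T) s := by
    intro d hd s hs
    have h1 := (HasDerivWithinAt.const_mul (α * β) (hEder s).hasDerivWithinAt).sub
      (HasDerivWithinAt.const_mul (2 * β) (hd s hs))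
    have h2 := h1.sub (HasDerivWithinAt.const_mul (b * σ ^ 2) (hh₁der s).hasDerivWithinAt)
    have h3 := h2.sub (HasDerivWithinAt.const_mul (2 * c * σ ^ 2) (hh₂der s).hasDerivWithinAt)
    refine h3.congr_deriv ?_
    ring
  have hG0t : (∫ v₁ in t..T, G0 v₁) = ∫ v₁ in t..T, g v₁ :=
    integral_congr fun y hy => hG0eq y (uIcc_subset_Icc htI ⟨htT.le, le_refl T⟩ hy)
  constructor
  · -- forward
    intro hint
    have hgP : ∀ s ∈ Icc t T, g s = P s := fun s hs => by rw [hint s hs, key s hs]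
    have hgder : ∀ s ∈ Icc t T, HasDerivWithinAt g (G s) (Icc t T) s := fun s hs =>
      ((hPder s).hasDerivWithinAt).congr (fun y hy => hgP y hy) (hgP s hs)
    have hG0der : ∀ s ∈ Icc t T, HasDerivWithinAt G0 (G s) (Icc t T) s := fun s hs =>
      (hgder s hs).congr (fun y hy => hG0eq y hy) (hG0eq s hs)
    have hdg : ∀ s ∈ Icc t T, derivWithin g (Icc t T) s = G s := fun s hs =>
      (hgder s hs).derivWithin (hUD s hs)
    have hgt : g t = x := by rw [hgP t htI, hPdef]; simp
    have hGder' := hGder G hG0der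
    refine ⟨?_, ?_, hgt, ?_⟩
    · -- ContDiffOn
      rw [show (2 : WithTop ℕ∞) = 1 + 1 by norm_num, contDiffOn_succ_iff_derivWithin hUD]
      refine ⟨fun s hs => (hgder s hs).differentiableWithinAt, by simp, ?_⟩
      apply ContDiffOn.congr (f := G)
      · rw [show (1 : WithTop ℕ∞) = 0 + 1 by norm_num, contDiffOn_succ_iff_derivWithin hUD]
        refine ⟨fun s hs => (hGder' s hs).differentiableWithinAt, by simp, ?_⟩
        rw [contDiffOn_zero]
        apply ContinuousOn.congr (f := fun s => -α * β ^ 2 * Real.exp (-β * (s - t))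
          - 2 * β * G s + b * σ ^ 2 * Real.exp (-β * (s - t)) + 2 * c * σ ^ 2 * G0 s)
        · apply Continuous.continuousOn
          fun_prop
        · exact fun s hs => (hGder' s hs).derivWithin (hUD s hs)
      · exact hdg
    · -- ODE
      intro s hs
      have e1 : derivWithin (derivWithin g (Icc t T)) (Icc t T) s = derivWithin G (Icc t T) s :=
        derivWithin_congr (fun y hy => hdg y hy) (hdg s hs)
      rw [e1, (hGder' s hs).derivWithin (hUD s hs), hdg s hs, hG0eq s hs]
    · -- first derivative at t
      rw [hdg t htI, hGdef]
      simp only []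
      rw [hG0eq t htI, hgt, hh₂def]
      simp only []
      rw [hG0t, hh₁def]
      simp [sub_self]
  · -- backward
    rintro ⟨hC2, hODE, hgt, hg't⟩
    have hdiffg : DifferentiableOn ℝ g (Icc t T) := hC2.differentiableOn (by norm_num)
    have hC2' := hC2
    rw [show (2 : WithTop ℕ∞) = 1 + 1 by norm_num,
      contDiffOn_succ_iff_derivWithin hUD] at hC2'
    have hDdiff : DifferentiableOn ℝ (derivWithin g (Icc t T)) (Icc t T) :=
      hC2'.2.2.differentiableOn (by norm_num)
    have hG0der : ∀ s ∈ Icc t T,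
        HasDerivWithinAt G0 (derivWithin g (Icc t T) s) (Icc t T) s := fun s hs =>
      ((hdiffg s hs).hasDerivWithinAt).congr (fun y hy => hG0eq y hy) (hG0eq s hs)
    have hGder' := hGder (derivWithin g (Icc t T)) hG0der
    have hDGder : ∀ y ∈ Ico t T,
        HasDerivWithinAt (fun s => derivWithin g (Icc t T) s - G s) 0 (Ici y) y := by
      intro y hy
      have hyI : y ∈ Icc t T := Ico_subset_Icc_self hy
      have h1 : HasDerivWithinAt (derivWithin g (Icc t T))
          (-α * β ^ 2 * Real.exp (-β * (y - t)) - 2 * β * derivWithin g (Icc t T) y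
            + b * σ ^ 2 * Real.exp (-β * (y - t)) + 2 * c * σ ^ 2 * g y) (Icc t T) y := by
        have h0 := (hDdiff y hyI).hasDerivWithinAt
        rwa [hODE y hyI] at h0
      have h2 := h1.sub (hGder' y hyI)
      have h3 : HasDerivWithinAt (fun s => derivWithin g (Icc t T) s - G s) 0 (Icc t T) y := by
        refine h2.congr_deriv ?_
        rw [hG0eq y hyI]; ring
      exact h3.mono_of_mem_nhdsWithin (Icc_mem_nhdsGE_of_mem hy)
    have hDG0 : derivWithin g (Icc t T) t - G t = 0 := by
      rw [hg't, hGdef]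
      simp only []
      rw [hG0eq t htI, hgt, hh₂def]
      simp only []
      rw [hG0t, hh₁def]
      simp [sub_self]
    have hcontDG : ContinuousOn (fun s => derivWithin g (Icc t T) s - G s) (Icc t T) :=
      (hDdiff.continuousOn).sub hGc.continuousOn
    have hDG : ∀ s ∈ Icc t T, derivWithin g (Icc t T) s = G s := by
      intro s hs
      have h := constant_of_has_deriv_right_zero hcontDG hDGder s hs
      rw [hDG0] at h
      linarith [h]
    have hgPder : ∀ y ∈ Ico t T, HasDerivWithinAt (fun s => g s - P s) 0 (Ici y) y := by
      intro y hy
      have hyI : y ∈ Icc t T := Ico_subset_Icc_self hy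
      have h1 := ((hdiffg y hyI).hasDerivWithinAt).sub ((hPder y).hasDerivWithinAt)
      have h2 : HasDerivWithinAt (fun s => g s - P s) 0 (Icc t T) y := by
        refine h1.congr_deriv ?_
        rw [hDG y hyI]; ring
      exact h2.mono_of_mem_nhdsWithin (Icc_mem_nhdsGE_of_mem hy)
    have hgP0 : g t - P t = 0 := by rw [hgt, hPdef]; simp
    have hgP : ∀ s ∈ Icc t T, g s = P s := by
      intro s hs
      have h := constant_of_has_deriv_right_zero (hg.sub hPc.continuousOn) hgPder s hs
      rw [Pi.sub_apply, Pi.sub_apply, hgP0] at h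
      linarith [h]
    intro s hs
    rw [hgP s hs, key s hs]
end

section
/- Suppose c > 0 and σ ≠ 0, and set η = √(β² + 2cσ²). Define A(τ) := 2c(e^{2ητ} − 1)/(β − η − (β + η)e^{2ητ}) for τ ≥ 0. Then the denominator β − η − (β + η)e^{2ητ} is strictly negative for all τ ≥ 0, A(0) = 0, and A is differentiable on [0,∞) with A'(τ) = σ²A(τ)² − 2βA(τ) − 2c for all τ ≥ 0. -/
open Set

/-- For `c > 0`, `σ ≠ 0` and `η = √(β² + 2cσ²)`, the function
`A(τ) = 2c(e^{2ητ} - 1)/(β - η - (β + η)e^{2ητ})` has strictly negative denominator on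
`[0,∞)`, satisfies `A(0) = 0`, and solves `A' = σ²A² - 2βA - 2c` on `[0,∞)`. -/
theorem statement16 (β σ c : ℝ) (hc : 0 < c) (hσ : σ ≠ 0)
    (η : ℝ) (hη : η = Real.sqrt (β ^ 2 + 2 * c * σ ^ 2))
    (A : ℝ → ℝ)
    (hA : ∀ τ, A τ = 2 * c * (Real.exp (2 * η * τ) - 1)
      / (β - η - (β + η) * Real.exp (2 * η * τ))) :
    (∀ τ ≥ (0 : ℝ), β - η - (β + η) * Real.exp (2 * η * τ) < 0) ∧
    A 0 = 0 ∧
    (∀ τ ∈ Ici (0 : ℝ),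
      HasDerivWithinAt A (σ ^ 2 * (A τ) ^ 2 - 2 * β * A τ - 2 * c) (Ici 0) τ) := by
  have hσ2 : 0 < σ ^ 2 := by positivity
  have harg : 0 < β ^ 2 + 2 * c * σ ^ 2 := by positivity
  have hη2 : η ^ 2 = β ^ 2 + 2 * c * σ ^ 2 := by
    rw [hη, Real.sq_sqrt harg.le]
  have hηpos : 0 < η := by
    rw [hη]; exact Real.sqrt_pos.mpr harg
  have hβη : 0 < β + η := by nlinarith [mul_pos hc hσ2]
  have hβη' : β - η < 0 := by nlinarith [mul_pos hc hσ2]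
  have hden : ∀ τ ≥ (0 : ℝ), β - η - (β + η) * Real.exp (2 * η * τ) < 0 := by
    intro τ hτ
    have hE : (1 : ℝ) ≤ Real.exp (2 * η * τ) := by
      rw [show (1:ℝ) = Real.exp 0 from (Real.exp_zero).symm]
      exact Real.exp_le_exp.mpr (by positivity)
    nlinarith
  refine ⟨hden, ?_, ?_⟩
  · rw [hA 0]; simp
  · intro τ hτ
    have hτ0 : (0:ℝ) ≤ τ := hτ
    have hDne : β - η - (β + η) * Real.exp (2 * η * τ) ≠ 0 := (hden τ hτ0).ne
    have hE : HasDerivAt (fun t => Real.exp (2 * η * t))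
        (Real.exp (2 * η * τ) * (2 * η * 1)) τ :=
      (((hasDerivAt_id τ).const_mul (2 * η)).exp)
    have hN : HasDerivAt (fun t => 2 * c * (Real.exp (2 * η * t) - 1))
        (2 * c * (Real.exp (2 * η * τ) * (2 * η * 1))) τ :=
      ((hE.sub_const 1).const_mul (2 * c))
    have hD : HasDerivAt (fun t => β - η - (β + η) * Real.exp (2 * η * t))
        (-((β + η) * (Real.exp (2 * η * τ) * (2 * η * 1)))) τ :=
      ((hE.const_mul (β + η)).const_sub (β - η))
    have hQ := hN.div hD hDne
    have hAeq : A = fun t => 2 * c * (Real.exp (2 * η * t) - 1)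
        / (β - η - (β + η) * Real.exp (2 * η * t)) := funext hA
    rw [hAeq]
    apply (hQ.hasDerivWithinAt).congr_deriv
    beta_reduce
    set E := Real.exp (2 * η * τ) with hEdef
    have hEpos : 0 < E := Real.exp_pos _
    have hσeq : σ ^ 2 = (η ^ 2 - β ^ 2) / (2 * c) := by
      field_simp; linarith
    rw [hσeq]
    field_simp
    rw [div_sub_one (pow_ne_zero 2 (by rw [mul_comm E]; exact hDne)), div_left_inj' (pow_ne_zero 2 (by rw [mul_comm E]; exact hDne))]
    ring
end

section
/- Suppose c > 0, σ ≠ 0 and β ≠ 0, set η = √(β² + 2cσ²), let A(τ) := 2c(e^{2ητ} − 1)/(β − η − (β + η)e^{2ητ}), and let B(τ) := { [αβ + (bσ² − αβ²)β/η²]·[−(β + η)(e^{2ητ} − 1) − 2η] + ((bσ² − αβ²)(β² − η²)/η²)·(e^{2ητ} − 1) + 2ηe^{ητ}·(bσ²η² − 2cσ²(bσ² − αβ²))/(βη²) } / { σ²[(β + η)(e^{2ητ} − 1) + 2η] }. Define C(τ) := [(b²σ² − 2αβ²b − 2α²β²c)/(2η²)]·τ + (1/2)·log( 2ηe^{(η+β)τ}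 / ((β + η)e^{2ητ} + η − β) ) + [2c(bσ² − αβ²)² + 2β(b + 2cα)(bσ² − αβ²)(β + η)e^{ητ} − β²σ²(b + 2cα)²] / ( η³(β + η)[(β + η)e^{2ητ} + η − β] ) + [β²σ²(b + 2cα)² − 2c(bσ² − αβ²)² − 2β(b + 2cα)(bσ² − αβ²)(β + η)] / ( 2η⁴(β + η) ) − aτ for τ ≥ 0. Then C(0) = 0 and C is differentiable on [0,∞) with C'(τ) = αβB(τ) + (1/2)σ²B(τ)² + (1/2)σ²A(τ) − a for all τ ≥ 0. -/
open Set

set_option maxHeartbeats 4000000 in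
/-- For `c > 0`, `σ ≠ 0`, `β ≠ 0`, the explicit function `C(τ)` satisfies
`C(0) = 0` and solves `C' = αβB + (1/2)σ²B² + (1/2)σ²A - a` on `[0,∞)`. -/
theorem statement18 (α β σ a b c : ℝ) (hc : 0 < c) (hσ : σ ≠ 0) (hβ : β ≠ 0)
    (η : ℝ) (hη : η = Real.sqrt (β ^ 2 + 2 * c * σ ^ 2))
    (A : ℝ → ℝ)
    (hA : ∀ τ, A τ = 2 * c * (Real.exp (2 * η * τ) - 1)
      / (β - η - (β + η) * Real.exp (2 * η * τ)))
    (B : ℝ → ℝ)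
    (hB : ∀ τ, B τ =
      ((α * β + (b * σ ^ 2 - α * β ^ 2) * β / η ^ 2)
          * (-(β + η) * (Real.exp (2 * η * τ) - 1) - 2 * η)
        + (b * σ ^ 2 - α * β ^ 2) * (β ^ 2 - η ^ 2) / η ^ 2
          * (Real.exp (2 * η * τ) - 1)
        + 2 * η * Real.exp (η * τ)
          * (b * σ ^ 2 * η ^ 2 - 2 * c * σ ^ 2 * (b * σ ^ 2 - α * β ^ 2))
          / (β * η ^ 2))
      / (σ ^ 2 * ((β + η) * (Real.exp (2 * η * τ) - 1) + 2 * η)))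
    (C : ℝ → ℝ)
    (hC : ∀ τ, C τ =
      (b ^ 2 * σ ^ 2 - 2 * α * β ^ 2 * b - 2 * α ^ 2 * β ^ 2 * c) / (2 * η ^ 2) * τ
      + (1 / 2) * Real.log (2 * η * Real.exp ((η + β) * τ)
          / ((β + η) * Real.exp (2 * η * τ) + η - β))
      + (2 * c * (b * σ ^ 2 - α * β ^ 2) ^ 2
          + 2 * β * (b + 2 * c * α) * (b * σ ^ 2 - α * β ^ 2) * (β + η)
            * Real.exp (η * τ)
          - β ^ 2 * σ ^ 2 * (b + 2 * c * α) ^ 2)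
        / (η ^ 3 * (β + η) * ((β + η) * Real.exp (2 * η * τ) + η - β))
      + (β ^ 2 * σ ^ 2 * (b + 2 * c * α) ^ 2
          - 2 * c * (b * σ ^ 2 - α * β ^ 2) ^ 2
          - 2 * β * (b + 2 * c * α) * (b * σ ^ 2 - α * β ^ 2) * (β + η))
        / (2 * η ^ 4 * (β + η))
      - a * τ) :
    C 0 = 0 ∧
    (∀ τ ∈ Ici (0 : ℝ),
      HasDerivWithinAt C
        (α * β * B τ + (1 / 2) * σ ^ 2 * (B τ) ^ 2 + (1 / 2) * σ ^ 2 * A τ - a)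
        (Ici 0) τ) := by
  have hσ2 : (0:ℝ) < σ ^ 2 := by positivity
  have hpos : (0:ℝ) < β ^ 2 + 2 * c * σ ^ 2 := by positivity
  have hη2 : η ^ 2 = β ^ 2 + 2 * c * σ ^ 2 := by rw [hη, Real.sq_sqrt hpos.le]
  have hηpos : (0:ℝ) < η := by rw [hη]; exact Real.sqrt_pos.2 hpos
  have hβlt : β < η := by nlinarith
  have hβgt : -η < β := by nlinarith
  have hβη : (0:ℝ) < β + η := by linarith
  have hηβ : (0:ℝ) < η - β := by linarith
  have hD : ∀ t : ℝ, 0 < (β + η) * Real.exp (2 * η * t) + η - β := fun t => by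
    have := Real.exp_pos (2 * η * t); nlinarith
  have hc2 : c = (η ^ 2 - β ^ 2) / (2 * σ ^ 2) := by
    rw [eq_div_iff (by positivity : (2 * σ ^ 2 : ℝ) ≠ 0)]
    linear_combination -hη2
  constructor
  · rw [hC 0]
    simp only [mul_zero, zero_mul, Real.exp_zero, mul_one]
    rw [show β + η + η - β = 2 * η by ring,
      div_self (by positivity : (2 * η : ℝ) ≠ 0), Real.log_one]
    field_simp
    ring
  · intro τ _
    have hCfun : C = fun t => (b ^ 2 * σ ^ 2 - 2 * α * β ^ 2 * b - 2 * α ^ 2 * β ^ 2 * c) / (2 * η ^ 2) * t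
        + (1/2) * Real.log (2 * η) + (1/2) * ((η + β) * t)
        - (1/2) * Real.log ((β + η) * Real.exp (2 * η * t) + η - β)
        + ((2 * c * (b * σ ^ 2 - α * β ^ 2) ^ 2 - β ^ 2 * σ ^ 2 * (b + 2 * c * α) ^ 2)
            + (2 * β * (b + 2 * c * α) * (b * σ ^ 2 - α * β ^ 2) * (β + η)) * Real.exp (η * t))
          / (η ^ 3 * (β + η) * ((β + η) * Real.exp (2 * η * t) + η - β))
        + (β ^ 2 * σ ^ 2 * (b + 2 * c * α) ^ 2 - 2 * c * (b * σ ^ 2 - α * β ^ 2) ^ 2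
            - 2 * β * (b + 2 * c * α) * (b * σ ^ 2 - α * β ^ 2) * (β + η)) / (2 * η ^ 4 * (β + η))
        - a * t := by
      funext t
      rw [hC t, Real.log_div (by positivity) (hD t).ne',
        Real.log_mul (by positivity) (Real.exp_ne_zero _), Real.log_exp]
      ring
    rw [hCfun]
    have hlin2 : HasDerivAt (fun t : ℝ => 2 * η * t) (2 * η) τ := by
      simpa using (hasDerivAt_id τ).const_mul (2 * η)
    have hexp2 : HasDerivAt (fun t : ℝ => Real.exp (2 * η * t)) (Real.exp (2 * η * τ) * (2 * η)) τ := hlin2.exp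
    have hDd : HasDerivAt (fun t : ℝ => (β + η) * Real.exp (2 * η * t) + η - β)
        ((β + η) * (Real.exp (2 * η * τ) * (2 * η))) τ := by
      simpa using ((hexp2.const_mul (β + η)).add_const η).sub_const β
    have hlog : HasDerivAt (fun t : ℝ => Real.log ((β + η) * Real.exp (2 * η * t) + η - β))
        ((β + η) * (Real.exp (2 * η * τ) * (2 * η)) / ((β + η) * Real.exp (2 * η * τ) + η - β)) τ :=
      hDd.log (hD τ).ne'
    have hexp1 : HasDerivAt (fun t : ℝ => Real.exp (η * t)) (Real.exp (η * τ) * η) τ := by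
      simpa using (((hasDerivAt_id τ).const_mul η).exp)
    have hN : HasDerivAt (fun t : ℝ => (2 * c * (b * σ ^ 2 - α * β ^ 2) ^ 2 - β ^ 2 * σ ^ 2 * (b + 2 * c * α) ^ 2)
        + (2 * β * (b + 2 * c * α) * (b * σ ^ 2 - α * β ^ 2) * (β + η)) * Real.exp (η * t))
        ((2 * β * (b + 2 * c * α) * (b * σ ^ 2 - α * β ^ 2) * (β + η)) * (Real.exp (η * τ) * η)) τ :=
      (hexp1.const_mul _).const_add _
    have hG : HasDerivAt (fun t : ℝ => η ^ 3 * (β + η) * ((β + η) * Real.exp (2 * η * t) + η - β))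
        (η ^ 3 * (β + η) * ((β + η) * (Real.exp (2 * η * τ) * (2 * η)))) τ := hDd.const_mul _
    have hGne : η ^ 3 * (β + η) * ((β + η) * Real.exp (2 * η * τ) + η - β) ≠ 0 := by
      have := hD τ; positivity
    have hquot := hN.div hG hGne
    have hd0 : HasDerivAt (fun t : ℝ => (b ^ 2 * σ ^ 2 - 2 * α * β ^ 2 * b - 2 * α ^ 2 * β ^ 2 * c) / (2 * η ^ 2) * t
        + (1/2) * Real.log (2 * η) + (1/2) * ((η + β) * t)
        - (1/2) * Real.log ((β + η) * Real.exp (2 * η * t) + η - β)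
        + ((2 * c * (b * σ ^ 2 - α * β ^ 2) ^ 2 - β ^ 2 * σ ^ 2 * (b + 2 * c * α) ^ 2)
            + (2 * β * (b + 2 * c * α) * (b * σ ^ 2 - α * β ^ 2) * (β + η)) * Real.exp (η * t))
          / (η ^ 3 * (β + η) * ((β + η) * Real.exp (2 * η * t) + η - β))
        + (β ^ 2 * σ ^ 2 * (b + 2 * c * α) ^ 2 - 2 * c * (b * σ ^ 2 - α * β ^ 2) ^ 2
            - 2 * β * (b + 2 * c * α) * (b * σ ^ 2 - α * β ^ 2) * (β + η)) / (2 * η ^ 4 * (β + η))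
        - a * t)
        ((b ^ 2 * σ ^ 2 - 2 * α * β ^ 2 * b - 2 * α ^ 2 * β ^ 2 * c) / (2 * η ^ 2)
          + (1/2) * (η + β)
          - (1/2) * ((β + η) * (Real.exp (2 * η * τ) * (2 * η)) / ((β + η) * Real.exp (2 * η * τ) + η - β))
          + ((2 * β * (b + 2 * c * α) * (b * σ ^ 2 - α * β ^ 2) * (β + η)) * (Real.exp (η * τ) * η)
               * (η ^ 3 * (β + η) * ((β + η) * Real.exp (2 * η * τ) + η - β))
             - ((2 * c * (b * σ ^ 2 - α * β ^ 2) ^ 2 - β ^ 2 * σ ^ 2 * (b + 2 * c * α) ^ 2)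
                 + (2 * β * (b + 2 * c * α) * (b * σ ^ 2 - α * β ^ 2) * (β + η)) * Real.exp (η * τ))
               * (η ^ 3 * (β + η) * ((β + η) * (Real.exp (2 * η * τ) * (2 * η)))))
            / (η ^ 3 * (β + η) * ((β + η) * Real.exp (2 * η * τ) + η - β)) ^ 2
          - a) τ := by
      have h1 : HasDerivAt (fun t : ℝ => (b ^ 2 * σ ^ 2 - 2 * α * β ^ 2 * b - 2 * α ^ 2 * β ^ 2 * c) / (2 * η ^ 2) * t)
          ((b ^ 2 * σ ^ 2 - 2 * α * β ^ 2 * b - 2 * α ^ 2 * β ^ 2 * c) / (2 * η ^ 2)) τ := by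
        simpa using (hasDerivAt_id τ).const_mul ((b ^ 2 * σ ^ 2 - 2 * α * β ^ 2 * b - 2 * α ^ 2 * β ^ 2 * c) / (2 * η ^ 2))
      have h3 : HasDerivAt (fun t : ℝ => (1/2) * ((η + β) * t)) ((1/2) * (η + β)) τ := by
        simpa using ((hasDerivAt_id τ).const_mul (η + β)).const_mul (1/2 : ℝ)
      have h7 : HasDerivAt (fun t : ℝ => a * t) a τ := by
        simpa using (hasDerivAt_id τ).const_mul a
      exact (((((h1.add_const _).add h3).sub (hlog.const_mul (1/2 : ℝ))).add hquot).add_const _).sub h7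
    have hEq : α * β * B τ + (1 / 2) * σ ^ 2 * (B τ) ^ 2 + (1 / 2) * σ ^ 2 * A τ - a =
        ((b ^ 2 * σ ^ 2 - 2 * α * β ^ 2 * b - 2 * α ^ 2 * β ^ 2 * c) / (2 * η ^ 2)
          + (1/2) * (η + β)
          - (1/2) * ((β + η) * (Real.exp (2 * η * τ) * (2 * η)) / ((β + η) * Real.exp (2 * η * τ) + η - β))
          + ((2 * β * (b + 2 * c * α) * (b * σ ^ 2 - α * β ^ 2) * (β + η)) * (Real.exp (η * τ) * η)
               * (η ^ 3 * (β + η) * ((β + η) * Real.exp (2 * η * τ) + η - β))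
             - ((2 * c * (b * σ ^ 2 - α * β ^ 2) ^ 2 - β ^ 2 * σ ^ 2 * (b + 2 * c * α) ^ 2)
                 + (2 * β * (b + 2 * c * α) * (b * σ ^ 2 - α * β ^ 2) * (β + η)) * Real.exp (η * τ))
               * (η ^ 3 * (β + η) * ((β + η) * (Real.exp (2 * η * τ) * (2 * η)))))
            / (η ^ 3 * (β + η) * ((β + η) * Real.exp (2 * η * τ) + η - β)) ^ 2
          - a) := by
      rw [hA, hB]
      have hE2 : Real.exp (2 * η * τ) = Real.exp (η * τ) * Real.exp (η * τ) := by
        rw [← Real.exp_add]; ring_nf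
      rw [hE2]
      have hE0 : (0:ℝ) < Real.exp (η * τ) := Real.exp_pos _
      have hDne : (β + η) * (Real.exp (η * τ) * Real.exp (η * τ)) + η - β ≠ 0 := by
        rw [← hE2]; exact (hD τ).ne'
      have hAden : β - η - (β + η) * (Real.exp (η * τ) * Real.exp (η * τ)) ≠ 0 := by
        intro h
        apply hDne
        linarith
      have hBden : (β + η) * ((Real.exp (η * τ) * Real.exp (η * τ)) - 1) + 2 * η ≠ 0 := by
        intro h
        apply hDne
        linarith
      generalize Real.exp (η * τ) = E at hE0 hDne hAden hBden ⊢
      rw [hc2]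
      have hσ4 : (2:ℝ) * σ ^ 2 ≠ 0 := by positivity
      have hη0 : η ≠ 0 := hηpos.ne'
      have hβη0 : β + η ≠ 0 := hβη.ne'
      rw [← sq] at hDne hAden hBden
      simp only [← sq]
      rw [show β - η - (β + η) * E ^ 2 = -((β + η) * E ^ 2 + η - β) by ring,
        show (β + η) * (E ^ 2 - 1) + 2 * η = (β + η) * E ^ 2 + η - β by ring]
      field_simp
      ring
    rw [hEq]
    exact hd0.hasDerivWithinAt
end

section
/- Let T > 0 and suppose A, B, C : [0,T] → ℝ are differentiable functions with A(0) = B(0) = C(0) = 0 satisfying, for all τ ∈ [0,T], A'(τ) = σ²A(τ)² − 2βA(τ) − 2c, B'(τ) = αβA(τ) − βB(τ) + σ²A(τ)B(τ) − b, and C'(τ) = αβB(τ) + (1/2)σ²B(τ)² + (1/2)σ²A(τ) − a. Then the function P(t,x) := exp( (1/2)A(T−t)x² + B(T−t)x + C(T−t) ) satisfies, for all (t,x) ∈ [0,T] × ℝ, the term-structure partial differential equation ∂P/∂t(t,x) + β(α − x)·∂P/∂x(t,x) + (1/2)σ²·∂²P/∂x²(t,x) = (cx² + bx + a)·P(t,x),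 together with the terminal condition P(T,x) = 1 for all x ∈ ℝ. -/
open Set

/-- If `A`, `B`, `C` vanish at `0` and solve the Riccati-type system of
ODEs on `[0,T]`, then `P(t,x) = exp((1/2)A(T-t)x² + B(T-t)x + C(T-t))` solves the
term-structure PDE `∂P/∂t + β(α - x)∂P/∂x + (1/2)σ²∂²P/∂x² = (cx² + bx + a)P` with
terminal condition `P(T,·) = 1`. -/
theorem statement19 (α β σ a b c : ℝ) (T : ℝ) (hT : 0 < T)
    (A B C : ℝ → ℝ)
    (hA0 : A 0 = 0) (hB0 : B 0 = 0) (hC0 : C 0 = 0)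
    (hA : ∀ τ ∈ Icc (0 : ℝ) T,
      HasDerivWithinAt A (σ ^ 2 * (A τ) ^ 2 - 2 * β * A τ - 2 * c) (Icc 0 T) τ)
    (hB : ∀ τ ∈ Icc (0 : ℝ) T,
      HasDerivWithinAt B (α * β * A τ - β * B τ + σ ^ 2 * A τ * B τ - b) (Icc 0 T) τ)
    (hC : ∀ τ ∈ Icc (0 : ℝ) T,
      HasDerivWithinAt C
        (α * β * B τ + (1 / 2) * σ ^ 2 * (B τ) ^ 2 + (1 / 2) * σ ^ 2 * A τ - a)
        (Icc 0 T) τ)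
    (P : ℝ → ℝ → ℝ)
    (hP : ∀ t x, P t x =
      Real.exp ((1 / 2) * A (T - t) * x ^ 2 + B (T - t) * x + C (T - t))) :
    (∀ t ∈ Icc (0 : ℝ) T, ∀ x : ℝ,
      derivWithin (fun τ => P τ x) (Icc 0 T) t
        + β * (α - x) * deriv (fun y => P t y) x
        + (1 / 2) * σ ^ 2 * deriv (deriv (P t)) x
      = (c * x ^ 2 + b * x + a) * P t x) ∧
    (∀ x : ℝ, P T x = 1) := by
  constructor
  · intro t ht x
    have hτ : T - t ∈ Icc (0 : ℝ) T := ⟨by linarith [ht.2], by linarith [ht.1]⟩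
    have hU : UniqueDiffWithinAt ℝ (Icc (0 : ℝ) T) t := (uniqueDiffOn_Icc hT) t ht
    have hmaps : MapsTo (fun s : ℝ => T - s) (Icc (0 : ℝ) T) (Icc (0 : ℝ) T) := by
      intro s hs
      simp only [mem_Icc] at hs ⊢
      constructor <;> linarith [hs.1, hs.2]
    have hneg : HasDerivWithinAt (fun s : ℝ => T - s) (-1) (Icc (0 : ℝ) T) t := by
      simpa using (hasDerivWithinAt_id t (Icc (0:ℝ) T)).const_sub T
    -- time derivatives of the coefficient functions composed with s ↦ T - s
    have hAc : HasDerivWithinAt (fun s => A (T - s))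
        (-(σ ^ 2 * (A (T - t)) ^ 2 - 2 * β * A (T - t) - 2 * c)) (Icc (0 : ℝ) T) t := by
      have h := (hA (T - t) hτ).comp t hneg hmaps
      refine h.congr_deriv ?_
      ring
    have hBc : HasDerivWithinAt (fun s => B (T - s))
        (-(α * β * A (T - t) - β * B (T - t) + σ ^ 2 * A (T - t) * B (T - t) - b))
        (Icc (0 : ℝ) T) t := by
      have h := (hB (T - t) hτ).comp t hneg hmaps
      refine h.congr_deriv ?_
      ring
    have hCc : HasDerivWithinAt (fun s => C (T - s))
        (-(α * β * B (T - t) + (1 / 2) * σ ^ 2 * (B (T - t)) ^ 2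
            + (1 / 2) * σ ^ 2 * A (T - t) - a)) (Icc (0 : ℝ) T) t := by
      have h := (hC (T - t) hτ).comp t hneg hmaps
      refine h.congr_deriv ?_
      ring
    -- time derivative of the exponent
    have hg : HasDerivWithinAt
        (fun s => (1 / 2) * A (T - s) * x ^ 2 + B (T - s) * x + C (T - s))
        ((1 / 2) * (-(σ ^ 2 * (A (T - t)) ^ 2 - 2 * β * A (T - t) - 2 * c)) * x ^ 2
          + (-(α * β * A (T - t) - β * B (T - t) + σ ^ 2 * A (T - t) * B (T - t) - b)) * x
          + (-(α * β * B (T - t) + (1 / 2) * σ ^ 2 * (B (T - t)) ^ 2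
              + (1 / 2) * σ ^ 2 * A (T - t) - a))) (Icc (0 : ℝ) T) t := by
      exact (((hAc.const_mul (1 / 2)).mul_const (x ^ 2)).add (hBc.mul_const x)).add hCc
    have hgexp := hg.exp
    -- spatial first derivative at any point
    have hd1 : ∀ y : ℝ, HasDerivAt
        (fun y => Real.exp ((1 / 2) * A (T - t) * y ^ 2 + B (T - t) * y + C (T - t)))
        ((A (T - t) * y + B (T - t))
          * Real.exp ((1 / 2) * A (T - t) * y ^ 2 + B (T - t) * y + C (T - t))) y := by
      intro y
      have hpoly : HasDerivAt
          (fun y : ℝ => (1 / 2) * A (T - t) * y ^ 2 + B (T - t) * y + C (T - t))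
          (A (T - t) * y + B (T - t)) y := by
        have h := (((hasDerivAt_pow 2 y).const_mul ((1 / 2) * A (T - t))).add
          ((hasDerivAt_id' y).const_mul (B (T - t)))).add_const (C (T - t))
        refine h.congr_deriv ?_
        push_cast
        ring
      have h := hpoly.exp
      convert h using 1
      ring
    -- spatial second derivative at x
    have hd2 : HasDerivAt
        (fun y => (A (T - t) * y + B (T - t))
          * Real.exp ((1 / 2) * A (T - t) * y ^ 2 + B (T - t) * y + C (T - t)))
        ((A (T - t) + (A (T - t) * x + B (T - t)) ^ 2)
          * Real.exp ((1 / 2) * A (T - t) * x ^ 2 + B (T - t) * x + C (T - t))) x := by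
      have hlin : HasDerivAt (fun y : ℝ => A (T - t) * y + B (T - t)) (A (T - t)) x := by
        simpa using ((hasDerivAt_id' x).const_mul (A (T - t))).add_const (B (T - t))
      have h := hlin.mul (hd1 x)
      refine h.congr_deriv ?_
      ring
    have hPfun : P t = fun y =>
        Real.exp ((1 / 2) * A (T - t) * y ^ 2 + B (T - t) * y + C (T - t)) :=
      funext fun y => hP t y
    simp only [hP]
    rw [hPfun]
    rw [hgexp.derivWithin hU, (hd1 x).deriv]
    rw [show deriv (fun y =>
        Real.exp ((1 / 2) * A (T - t) * y ^ 2 + B (T - t) * y + C (T - t)))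
      = fun y => (A (T - t) * y + B (T - t))
          * Real.exp ((1 / 2) * A (T - t) * y ^ 2 + B (T - t) * y + C (T - t)) from
      funext fun y => (hd1 y).deriv]
    rw [hd2.deriv]
    ring
  · intro x
    rw [hP]
    simp [hA0, hB0, hC0]
end
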